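/- Let n and k be integers with 1 ≤ k ≤ n − 3, and let J_{n,k} ⊆ K[x_1,…,x_n] be the ideal generated by all squarefree monomials x_{i_1} ··· x_{i_{k+2}} with 1 ≤ i_1 < … < i_{k+2} ≤ n for which there exists t < k+2 with i_{t+1} − i_t ≥ 2; order G(J_{n,k}) by the lexicographic order induced by x_1 > … > x_n (an order of linear quotients). For u ∈ G(J_{n,k}) let set(u) = { l : x_l ∈ ( v ∈ G(J_{n,k}) : v >_lex u ) : u }. Then max{ |set(u)| : u ∈ G(J_{n,k}) } = n − k − 2. (Hence projdim HS_k(I(P_n^c)) = n − k − 2.) -/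
import Mathlib


open MvPolynomial

/-- `T = {i_1 < ⋯ < i_r}` has a gap: some consecutive pair of elements of `T` differs by ≥ 2. -/
def HasGap {n : ℕ} (T : Finset (Fin n)) : Prop :=
  ∃ a ∈ T, ∃ b ∈ T, (a : ℕ) + 2 ≤ (b : ℕ) ∧ ∀ x ∈ T, a < x → b ≤ x

/-- The exponent vector of the squarefree monomial `x_T = ∏_{i ∈ T} x_i`. -/
noncomputable def sqfree {n : ℕ} (T : Finset (Fin n)) : Fin n →₀ ℕ :=
  ∑ i ∈ T, Finsupp.single i 1

/-- `a >_lex b` for the lexicographic order on monomials induced by `x_1 > x_2 > ⋯ > x_n`. -/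
def lexGT {n : ℕ} (a b : Fin n →₀ ℕ) : Prop :=
  ∃ i : Fin n, (∀ j : Fin n, j < i → a j = b j) ∧ b i < a i

lemma sqfree_apply {n : ℕ} (T : Finset (Fin n)) (i : Fin n) :
    sqfree T i = if i ∈ T then 1 else 0 := by
  classical
  simp [sqfree, Finsupp.finset_sum_apply, Finsupp.single_apply]

lemma sqfree_le_iff {n : ℕ} (U T : Finset (Fin n)) (l : Fin n) :
    sqfree U ≤ Finsupp.single l 1 + sqfree T ↔ U ⊆ insert l T := by
  classical
  constructor
  · intro h i hi
    have := h i
    rw [sqfree_apply, Finsupp.add_apply, sqfree_apply, Finsupp.single_apply, if_pos hi] at this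
    simp only [Finset.mem_insert]
    by_contra hc
    push_neg at hc
    rw [if_neg (fun e => hc.1 e.symm), if_neg hc.2] at this
    omega
  · intro h i
    rw [sqfree_apply, Finsupp.add_apply, sqfree_apply, Finsupp.single_apply]
    by_cases hi : i ∈ U
    · rcases Finset.mem_insert.mp (h hi) with e | e
      · subst e; split <;> split <;> omega
      · simp [e, hi]
    · simp [hi]

lemma lexGT_irrefl {n : ℕ} (a : Fin n →₀ ℕ) : ¬ lexGT a a := by
  rintro ⟨i, _, h⟩; exact lt_irrefl _ h

lemma lexGT_iff {n : ℕ} {T : Finset (Fin n)} {l m : Fin n} (hl : l ∉ T) (hm : m ∈ T) :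
    lexGT (sqfree (insert l (T.erase m))) (sqfree T) ↔ l < m := by
  classical
  have hlm : l ≠ m := fun e => hl (e ▸ hm)
  constructor
  · rintro ⟨i, hj, hi⟩
    rw [sqfree_apply, sqfree_apply] at hi
    -- b i < a i forces i ∉ T, i ∈ insert l (T.erase m), so i = l
    by_cases h1 : i ∈ T <;> by_cases h2 : i ∈ insert l (T.erase m) <;>
      simp only [h1, h2, if_true, if_false] at hi <;> try omega
    have hiT : i ∉ T := h1
    have hiU : i ∈ insert l (T.erase m) := h2
    have hil : i = l := by
      rcases Finset.mem_insert.mp hiU with e | e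
      · exact e
      · exact absurd (Finset.mem_of_mem_erase e) hiT
    subst hil
    by_contra hlt
    have hml : m < i := lt_of_le_of_ne (not_lt.mp hlt) (Ne.symm hlm)
    have := hj m hml
    rw [sqfree_apply, sqfree_apply, if_pos hm] at this
    have : m ∈ insert i (T.erase m) := by
      by_contra h; simp [h] at this
    rcases Finset.mem_insert.mp this with e | e
    · exact hlm e.symm
    · exact (Finset.notMem_erase m T) e
  · intro hlt
    refine ⟨l, fun j hj => ?_, ?_⟩
    · rw [sqfree_apply, sqfree_apply]
      have hjl : j ≠ l := ne_of_lt hj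
      have hjm : j ≠ m := ne_of_lt (lt_trans hj hlt)
      simp [Finset.mem_insert, Finset.mem_erase, hjl, hjm]
    · rw [sqfree_apply, sqfree_apply, if_neg hl, if_pos (Finset.mem_insert_self l _)]
      omega

section
variable {K : Type*} [Field K] {n k : ℕ}

lemma mem_colon_iff (T : Finset (Fin n)) (hT : T.card = k + 2) (l : Fin n) :
    (MvPolynomial.X l ∈
      Submodule.colon
        (Ideal.span {p : MvPolynomial (Fin n) K | ∃ U : Finset (Fin n),
          U.card = k + 2 ∧ HasGap U ∧ lexGT (sqfree U) (sqfree T) ∧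
          p = monomial (sqfree U) 1})
        (Ideal.span {(monomial (sqfree T) (1 : K))})) ↔
    (l ∉ T ∧ ∃ m ∈ T, l < m ∧ HasGap (insert l (T.erase m))) := by
  classical
  have hset : {p : MvPolynomial (Fin n) K | ∃ U : Finset (Fin n),
      U.card = k + 2 ∧ HasGap U ∧ lexGT (sqfree U) (sqfree T) ∧
      p = monomial (sqfree U) 1} =
      (fun s => monomial s (1 : K)) '' {s | ∃ U : Finset (Fin n),
        U.card = k + 2 ∧ HasGap U ∧ lexGT (sqfree U) (sqfree T) ∧ s = sqfree U} := by
    ext p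
    constructor
    · rintro ⟨U, h1, h2, h3, rfl⟩; exact ⟨sqfree U, ⟨U, h1, h2, h3, rfl⟩, rfl⟩
    · rintro ⟨s, ⟨U, h1, h2, h3, rfl⟩, rfl⟩; exact ⟨U, h1, h2, h3, rfl⟩
  rw [hset, Ideal.mem_colon_span_singleton]
  have hmul : (MvPolynomial.X l : MvPolynomial (Fin n) K) * monomial (sqfree T) 1
      = monomial (Finsupp.single l 1 + sqfree T) 1 := by
    rw [X, monomial_mul, one_mul]
  rw [hmul, mem_ideal_span_monomial_image]
  rw [support_monomial, if_neg (one_ne_zero)]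
  simp only [Finset.mem_singleton, forall_eq]
  constructor
  · rintro ⟨s, ⟨U, h1, h2, h3, rfl⟩, hle⟩
    rw [sqfree_le_iff] at hle
    -- first: l ∉ T
    have hlT : l ∉ T := by
      intro hlT
      rw [Finset.insert_eq_self.mpr hlT] at hle
      have : U = T := Finset.eq_of_subset_of_card_le hle (by rw [hT, h1])
      exact lexGT_irrefl _ (this ▸ h3)
    refine ⟨hlT, ?_⟩
    have hUT : U ≠ T := fun e => lexGT_irrefl _ (e ▸ h3)
    have hlU : l ∈ U := by
      by_contra hlU
      have : U ⊆ T := fun x hx => by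
        rcases Finset.mem_insert.mp (hle hx) with e | e
        · exact absurd (e ▸ hx) hlU
        · exact e
      exact hUT (Finset.eq_of_subset_of_card_le this (by rw [hT, h1]))
    -- T \ U is a singleton
    have hcard : (T \ U).card = 1 := by
      have h1' : U.erase l ⊆ T := by
        intro x hx
        rcases Finset.mem_insert.mp (hle (Finset.mem_of_mem_erase hx)) with e | e
        · exact absurd e (Finset.ne_of_mem_erase hx)
        · exact e
      have heq : T \ U = T \ (U.erase l) := by
        ext x
        simp only [Finset.mem_sdiff, Finset.mem_erase]
        constructor
        · rintro ⟨hxT, hxU⟩; exact ⟨hxT, fun h => hxU h.2⟩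
        · rintro ⟨hxT, hxU⟩; exact ⟨hxT, fun h => hxU ⟨fun e => hlT (e ▸ hxT), h⟩⟩
      rw [heq, Finset.card_sdiff_of_subset h1', Finset.card_erase_of_mem hlU, h1, hT]
      omega
    obtain ⟨m, hm⟩ := Finset.card_eq_one.mp hcard
    have hmT : m ∈ T := (Finset.mem_sdiff.mp (hm ▸ Finset.mem_singleton_self m)).1
    have hmU : m ∉ U := (Finset.mem_sdiff.mp (hm ▸ Finset.mem_singleton_self m)).2
    have hUeq : U = insert l (T.erase m) := by
      apply Finset.eq_of_subset_of_card_le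
      · intro x hx
        rcases Finset.mem_insert.mp (hle hx) with e | e
        · rw [e]; exact Finset.mem_insert_self _ _
        · refine Finset.mem_insert_of_mem (Finset.mem_erase.mpr ⟨fun e => hmU (e ▸ hx), e⟩)
      · rw [Finset.card_insert_of_notMem (fun h => hlT (Finset.mem_of_mem_erase h)),
          Finset.card_erase_of_mem hmT, hT, h1]
        omega
    rw [hUeq] at h3 h2
    exact ⟨m, hmT, (lexGT_iff hlT hmT).mp h3, h2⟩
  · rintro ⟨hlT, m, hmT, hlm, hgap⟩
    refine ⟨sqfree (insert l (T.erase m)), ⟨insert l (T.erase m), ?_, hgap,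
      (lexGT_iff hlT hmT).mpr hlm, rfl⟩, ?_⟩
    · rw [Finset.card_insert_of_notMem (fun h => hlT (Finset.mem_of_mem_erase h)),
        Finset.card_erase_of_mem hmT, hT]
      omega
    · rw [sqfree_le_iff]
      intro x hx
      rcases Finset.mem_insert.mp hx with e | e
      · rw [e]; exact Finset.mem_insert_self _ _
      · exact Finset.mem_insert_of_mem (Finset.mem_of_mem_erase e)
end

lemma witness_combinatorics (n k : ℕ) (hk : 1 ≤ k) (hn : k + 3 ≤ n) :
    ∃ T : Finset (Fin n), T.card = k + 2 ∧ HasGap T ∧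
      {l : Fin n | l ∉ T ∧ ∃ m ∈ T, l < m ∧ HasGap (insert l (T.erase m))} = ↑(Tᶜ) := by
  classical
  refine ⟨insert ⟨0, by omega⟩ (Finset.Ioc ⟨n - k - 2, by omega⟩ ⟨n - 1, by omega⟩), ?_, ?_, ?_⟩
  · rw [Finset.card_insert_of_notMem, Fin.card_Ioc]
    · show n - 1 - (n - k - 2) + 1 = k + 2
      omega
    · simp only [Finset.mem_Ioc, Fin.lt_def]
      show ¬(n - k - 2 < 0 ∧ _)
      omega
  · refine ⟨⟨0, by omega⟩, Finset.mem_insert_self _ _, ⟨n - k - 1, by omega⟩, ?_, ?_, ?_⟩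
    · refine Finset.mem_insert_of_mem ?_
      rw [Finset.mem_Ioc]
      constructor
      · rw [Fin.lt_def]; show n - k - 2 < n - k - 1; omega
      · rw [Fin.le_def]; show n - k - 1 ≤ n - 1; omega
    · show 0 + 2 ≤ n - k - 1; omega
    · intro x hx hzx
      rw [Finset.mem_insert, Finset.mem_Ioc, Fin.ext_iff, Fin.lt_def, Fin.le_def] at hx
      rw [Fin.lt_def] at hzx
      rw [Fin.le_def]
      show n - k - 1 ≤ (x : ℕ)
      revert hx hzx
      show ((x:ℕ) = 0 ∨ n - k - 2 < (x:ℕ) ∧ (x:ℕ) ≤ n - 1) → 0 < (x:ℕ) → _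
      omega
  · have memT : ∀ x : Fin n,
        x ∈ insert (⟨0, by omega⟩ : Fin n) (Finset.Ioc ⟨n - k - 2, by omega⟩ ⟨n - 1, by omega⟩) ↔
        ((x : ℕ) = 0 ∨ n - k - 1 ≤ (x : ℕ)) := by
      intro x
      rw [Finset.mem_insert, Finset.mem_Ioc, Fin.ext_iff, Fin.lt_def, Fin.le_def]
      show (x:ℕ) = 0 ∨ n - k - 2 < (x:ℕ) ∧ (x:ℕ) ≤ n - 1 ↔ _
      omega
    ext l
    rw [Set.mem_setOf_eq, Finset.coe_compl, Set.mem_compl_iff, Finset.mem_coe]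
    constructor
    · exact fun h => h.1
    · intro hlT
      refine ⟨hlT, ?_⟩
      have hlb : 1 ≤ (l : ℕ) ∧ (l : ℕ) ≤ n - k - 2 := by
        have := (memT l).not.mp hlT
        push_neg at this
        omega
      by_cases hl2 : 2 ≤ (l : ℕ)
      · -- m = ⟨n-1⟩
        have hbT := (memT ⟨n - 1, by omega⟩).mpr (Or.inr (by show n - k - 1 ≤ n - 1; omega))
        refine ⟨⟨n - 1, by omega⟩, hbT, ?_, ?_⟩
        · rw [Fin.lt_def]; show (l:ℕ) < n - 1; omega
        · refine ⟨⟨0, by omega⟩, ?_, l, Finset.mem_insert_self _ _, by show 0 + 2 ≤ (l:ℕ); omega, ?_⟩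
          · refine Finset.mem_insert_of_mem (Finset.mem_erase.mpr ⟨?_, (memT _).mpr (Or.inl rfl)⟩)
            exact Fin.ne_of_val_ne (show (0:ℕ) ≠ n - 1 by omega)
          · intro x hx hzx
            rw [Finset.mem_insert, Finset.mem_erase, memT, Fin.ext_iff] at hx
            rw [Fin.lt_def] at hzx
            rw [Fin.le_def]
            rcases hx with e | ⟨hxb, hxT⟩
            · rw [e]
            · have hxb' : (x:ℕ) ≠ n - 1 := fun h => hxb (Fin.ext (by rw [h]))
              omega
      · -- l = 1, m = ⟨n-k-1⟩
        have hl1 : (l : ℕ) = 1 := by omega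
        have hcT := (memT ⟨n - k - 1, by omega⟩).mpr (Or.inr (le_refl _))
        refine ⟨⟨n - k - 1, by omega⟩, hcT, by rw [Fin.lt_def]; show (l:ℕ) < n - k - 1; omega, ?_⟩
        refine ⟨l, Finset.mem_insert_self _ _, ⟨n - k, by omega⟩, ?_,
          by show (l:ℕ) + 2 ≤ n - k; omega, ?_⟩
        · refine Finset.mem_insert_of_mem (Finset.mem_erase.mpr
            ⟨?_, (memT _).mpr (Or.inr (by show n - k - 1 ≤ n - k; omega))⟩)
          exact Fin.ne_of_val_ne (show n - k ≠ n - k - 1 by omega)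
        · intro x hx hlx
          rw [Finset.mem_insert, Finset.mem_erase, memT, Fin.ext_iff] at hx
          rw [Fin.lt_def] at hlx
          rw [Fin.le_def]
          show n - k ≤ (x:ℕ)
          rcases hx with e | ⟨hxc, hxT⟩
          · rw [e] at hlx; omega
          · have hxc' : (x:ℕ) ≠ n - k - 1 := fun h => hxc (Fin.ext (by rw [h]))
            omega


set_option maxHeartbeats 1000000 in
/-- for `1 ≤ k ≤ n - 3`, in the ideal `J_{n,k} = HS_k(I(P_n^c))` (generated by the
squarefree monomials `x_{i_1} ⋯ x_{i_{k+2}}` with a gap `i_{t+1} - i_t ≥ 2`), ordered by the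
lexicographic order induced by `x_1 > ⋯ > x_n`, the maximum of `|set(u)|` over the minimal
generators `u` is `n - k - 2`; hence `projdim HS_k(I(P_n^c)) = n - k - 2`. -/
theorem stmt_14 {K : Type*} [Field K] (n k : ℕ) (hk : 1 ≤ k) (hkn : k ≤ n - 3) :
    IsGreatest {m : ℕ | ∃ T : Finset (Fin n), T.card = k + 2 ∧ HasGap T ∧
      m = {l : Fin n | MvPolynomial.X l ∈
        Submodule.colon
          (Ideal.span {p : MvPolynomial (Fin n) K | ∃ U : Finset (Fin n),
            U.card = k + 2 ∧ HasGap U ∧ lexGT (sqfree U) (sqfree T) ∧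
            p = monomial (sqfree U) 1})
          (Ideal.span {(monomial (sqfree T) (1 : K))})}.ncard}
      (n - k - 2) := by
  classical
  have hn : k + 3 ≤ n := by omega
  have key : ∀ T : Finset (Fin n), T.card = k + 2 →
      {l : Fin n | MvPolynomial.X l ∈
        Submodule.colon
          (Ideal.span {p : MvPolynomial (Fin n) K | ∃ U : Finset (Fin n),
            U.card = k + 2 ∧ HasGap U ∧ lexGT (sqfree U) (sqfree T) ∧
            p = monomial (sqfree U) 1})
          (Ideal.span {(monomial (sqfree T) (1 : K))})} =
      {l : Fin n | l ∉ T ∧ ∃ m ∈ T, l < m ∧ HasGap (insert l (T.erase m))} :=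
    fun T hT => Set.ext fun l => mem_colon_iff T hT l
  constructor
  · obtain ⟨T0, hc0, hg0, hs0⟩ := witness_combinatorics n k hk hn
    refine ⟨T0, hc0, hg0, ?_⟩
    rw [key T0 hc0, hs0, Set.ncard_coe_finset, Finset.card_compl, Fintype.card_fin, hc0]
    omega
  · rintro m ⟨T, hTc, hTg, rfl⟩
    rw [key T hTc]
    have hsub : {l : Fin n | l ∉ T ∧ ∃ m ∈ T, l < m ∧ HasGap (insert l (T.erase m))}
        ⊆ ↑(Tᶜ) := by
      intro l hl
      rw [Finset.coe_compl, Set.mem_compl_iff, Finset.mem_coe]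
      exact hl.1
    calc _ ≤ (↑(Tᶜ) : Set (Fin n)).ncard := Set.ncard_le_ncard hsub (Set.toFinite _)
      _ = n - k - 2 := by
          rw [Set.ncard_coe_finset, Finset.card_compl, Fintype.card_fin, hTc]
          omega
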